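/- A k-tridiagonal matrix admits a block diagonalization by a permutation: there is a permutation matrix P such that, for the k×k matrix T with nonzero entries only on the main diagonal and the second super- and sub-diagonals (entries at distance 2), PᵀTP is block diagonal with two tridiagonal blocks, one of size ⌈k/2⌉ (the odd-indexed rows/columns) and one of size ⌊k/2⌋ (the even-indexed rows/columns). Consequently det(T) = det(T_odd)·det(T_even), where T_odd[i,j] = T[2i−1, 2j−1] and T_even[i,j] = T[2i, 2j]. -/

import Mathlib

/-- A matrix `T` whose nonzero entries lie only on the main diagonal and the second
super- and sub-diagonals can be block-diagonalized by a permutation: there is a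
bijection putting `T` into block-diagonal form with the tridiagonal blocks `T_odd`
(odd-indexed rows/columns) and `T_even` (even-indexed rows/columns); consequently
`det T = det T_odd * det T_even`. -/
theorem stmt13 {R : Type*} [CommRing R] (k : ℕ) (T : Matrix (Fin k) (Fin k) R)
    (hT : ∀ p q : Fin k,
      p.1 ≠ q.1 → q.1 ≠ p.1 + 2 → p.1 ≠ q.1 + 2 → T p q = 0) :
    ∃ e : Fin ((k + 1) / 2) ⊕ Fin (k / 2) ≃ Fin k,
      T.submatrix e e = Matrix.fromBlocks
          (Matrix.of fun i j : Fin ((k + 1) / 2) =>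
            T ⟨2 * i.1, by have := i.isLt; omega⟩ ⟨2 * j.1, by have := j.isLt; omega⟩)
          0 0
          (Matrix.of fun i j : Fin (k / 2) =>
            T ⟨2 * i.1 + 1, by have := i.isLt; omega⟩
              ⟨2 * j.1 + 1, by have := j.isLt; omega⟩) ∧
      T.det =
        (Matrix.of fun i j : Fin ((k + 1) / 2) =>
          T ⟨2 * i.1, by have := i.isLt; omega⟩ ⟨2 * j.1, by have := j.isLt; omega⟩).det *
        (Matrix.of fun i j : Fin (k / 2) =>
          T ⟨2 * i.1 + 1, by have := i.isLt; omega⟩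
            ⟨2 * j.1 + 1, by have := j.isLt; omega⟩).det := by
  classical
  let e : Fin ((k + 1) / 2) ⊕ Fin (k / 2) ≃ Fin k :=
    { toFun := fun x => x.elim
        (fun i => ⟨2 * i.1, by have := i.isLt; omega⟩)
        (fun i => ⟨2 * i.1 + 1, by have := i.isLt; omega⟩)
      invFun := fun n =>
        if h : n.1 % 2 = 0 then Sum.inl ⟨n.1 / 2, by have := n.isLt; omega⟩
        else Sum.inr ⟨n.1 / 2, by have := n.isLt; omega⟩
      left_inv := by
        rintro (⟨i, hi⟩ | ⟨i, hi⟩) <;>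
          simp only [Sum.elim_inl, Sum.elim_inr, Fin.val_mk]
        · erw [dif_pos (show 2 * i % 2 = 0 by omega)]
          simp only [Sum.inl.injEq, Fin.mk.injEq]
          omega
        · erw [dif_neg (show ¬ (2 * i + 1) % 2 = 0 by omega)]
          simp only [Sum.inr.injEq, Fin.mk.injEq]
          omega
      right_inv := by
        intro n
        beta_reduce
        by_cases h : n.1 % 2 = 0
        · rw [dif_pos h]
          apply Fin.ext
          show 2 * (n.1 / 2) = n.1
          omega
        · rw [dif_neg h]
          apply Fin.ext
          show 2 * (n.1 / 2) + 1 = n.1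
          omega }
  refine ⟨e, ?_, ?_⟩
  · ext x y
    rcases x with i | i <;> rcases y with j | j <;>
      simp only [Matrix.submatrix_apply, Matrix.fromBlocks_apply₁₁,
        Matrix.fromBlocks_apply₁₂, Matrix.fromBlocks_apply₂₁,
        Matrix.fromBlocks_apply₂₂, Matrix.of_apply, Matrix.zero_apply, e,
        Equiv.coe_fn_mk, Sum.elim_inl, Sum.elim_inr]
    · apply hT <;> simp <;> omega
    · apply hT <;> simp <;> omega
  · have h1 : T.det = (T.submatrix e e).det := (Matrix.det_submatrix_equiv_self e T).symm
    rw [h1]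
    have h2 : T.submatrix e e = Matrix.fromBlocks
        (Matrix.of fun i j : Fin ((k + 1) / 2) =>
          T ⟨2 * i.1, by have := i.isLt; omega⟩ ⟨2 * j.1, by have := j.isLt; omega⟩)
        0 0
        (Matrix.of fun i j : Fin (k / 2) =>
          T ⟨2 * i.1 + 1, by have := i.isLt; omega⟩
            ⟨2 * j.1 + 1, by have := j.isLt; omega⟩) := by
      ext x y
      rcases x with i | i <;> rcases y with j | j <;>
        simp only [Matrix.submatrix_apply, Matrix.fromBlocks_apply₁₁,
          Matrix.fromBlocks_apply₁₂, Matrix.fromBlocks_apply₂₁,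
          Matrix.fromBlocks_apply₂₂, Matrix.of_apply, Matrix.zero_apply, e,
          Equiv.coe_fn_mk, Sum.elim_inl, Sum.elim_inr]
      · apply hT <;> simp <;> omega
      · apply hT <;> simp <;> omega
    rw [h2, Matrix.det_fromBlocks_zero₂₁]
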